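/- There exist infinitely many positive integers n such that max{sfp(n), sfp(n+1), sfp(n+2)} < n^{1/3}, i.e., max{sfp(n), sfp(n+1), sfp(n+2)}³ < n. -/
import Mathlib


/-- The squarefree part of `n`: the smallest positive integer `a` such that
`a ∣ n` and `n / a` is a perfect square. -/
noncomputable def sfp (n : ℕ) : ℕ := sInf {a : ℕ | 0 < a ∧ a ∣ n ∧ ∃ m : ℕ, n = a * m ^ 2}

lemma sfp_le (a m : ℕ) (ha : 0 < a) : sfp (a * m ^ 2) ≤ a := by
  apply Nat.sInf_le
  exact ⟨ha, dvd_mul_right a (m ^ 2), m, rfl⟩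

lemma sfp_le' (n a m : ℕ) (ha : 0 < a) (h : n = a * m ^ 2) : sfp n ≤ a := by
  subst h; exact sfp_le a m ha

/-- Pell-type solutions: infinitely many `j` with `9 ∣ j` and `48 j² = 23 k² + 1`. -/
lemma pell_sols : ∀ N : ℕ, ∃ j k : ℕ, N < j ∧ 9 ∣ j ∧ 48 * j ^ 2 = 23 * k ^ 2 + 1 := by
  intro N
  induction N with
  | zero => exact ⟨9, 13, by norm_num, by norm_num, by norm_num⟩
  | succ n ih =>
    obtain ⟨j, k, h1, h2, h3⟩ := ih
    refine ⟨7775 * j + 5382 * k, 11232 * j + 7775 * k, by omega, by omega, ?_⟩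
    zify at h3 ⊢
    linear_combination h3

theorem stmt11 :
    ∀ N : ℕ, ∃ n : ℕ, N < n ∧
      (max (sfp n) (max (sfp (n + 1)) (sfp (n + 2)))) ^ 3 < n := by
  intro N
  obtain ⟨j, k, hN, hdvd, hpell⟩ := pell_sols N
  obtain ⟨j₁, rfl⟩ := hdvd
  have hj1 : 1 ≤ j₁ := by nlinarith [hpell]
  refine ⟨(6 * (9 * j₁) - 1) * (12 * (9 * j₁) + 1) ^ 2, ?_, ?_⟩
  · have h1 : 9 * j₁ ≤ 6 * (9 * j₁) - 1 := by omega
    have h2 : 6 * (9 * j₁) - 1 ≤ (6 * (9 * j₁) - 1) * (12 * (9 * j₁) + 1) ^ 2 :=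
      Nat.le_mul_of_pos_right _ (by positivity)
    omega
  have h6 : 1 ≤ 6 * (9 * j₁) := by omega
  have h12 : 1 ≤ 12 * (9 * j₁) := by omega
  -- the three factorizations
  have e1 : (6 * (9 * j₁) - 1) * (12 * (9 * j₁) + 1) ^ 2 + 1 = (46 * j₁) * (9 * k) ^ 2 := by
    zify [h6] at *
    linear_combination (162 * (j₁ : ℤ)) * hpell
  have e2 : (6 * (9 * j₁) - 1) * (12 * (9 * j₁) + 1) ^ 2 + 2
      = (6 * (9 * j₁) + 1) * (12 * (9 * j₁) - 1) ^ 2 := by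
    zify [h6, h12]
    ring
  -- bounds on the squarefree parts
  have b0 : sfp ((6 * (9 * j₁) - 1) * (12 * (9 * j₁) + 1) ^ 2) ≤ 6 * (9 * j₁) - 1 :=
    sfp_le _ _ (by omega)
  have b1 : sfp ((6 * (9 * j₁) - 1) * (12 * (9 * j₁) + 1) ^ 2 + 1) ≤ 46 * j₁ :=
    sfp_le' _ _ (9 * k) (by omega) e1
  have b2 : sfp ((6 * (9 * j₁) - 1) * (12 * (9 * j₁) + 1) ^ 2 + 2) ≤ 6 * (9 * j₁) + 1 :=
    sfp_le' _ _ (12 * (9 * j₁) - 1) (by omega) e2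
  have hmax : max (sfp ((6 * (9 * j₁) - 1) * (12 * (9 * j₁) + 1) ^ 2))
      (max (sfp ((6 * (9 * j₁) - 1) * (12 * (9 * j₁) + 1) ^ 2 + 1))
        (sfp ((6 * (9 * j₁) - 1) * (12 * (9 * j₁) + 1) ^ 2 + 2))) ≤ 6 * (9 * j₁) + 1 :=
    max_le (by omega) (max_le (by omega) b2)
  calc (max (sfp ((6 * (9 * j₁) - 1) * (12 * (9 * j₁) + 1) ^ 2))
      (max (sfp ((6 * (9 * j₁) - 1) * (12 * (9 * j₁) + 1) ^ 2 + 1))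
        (sfp ((6 * (9 * j₁) - 1) * (12 * (9 * j₁) + 1) ^ 2 + 2)))) ^ 3
      ≤ (6 * (9 * j₁) + 1) ^ 3 := Nat.pow_le_pow_left hmax 3
    _ < (6 * (9 * j₁) - 1) * (12 * (9 * j₁) + 1) ^ 2 := by
        zify [h6]
        nlinarith [hj1]
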